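/- If F(x,y) = (a x² + 2b x y + c y²)/2 + (d x + e y)/2 + f is a quadratic packing polynomial on ℕ², then the discriminant D = b² - ac is a perfect square. -/

import Mathlib

lemma sqrt_quad_bound (s M N : ℕ) (h : s ^ 2 ≤ 4 * N + 2 * M * s) :
    s ≤ 2 * M + 2 * Nat.sqrt N + 2 := by
  by_contra hs
  push_neg at hs
  have h1 : N < (Nat.sqrt N + 1) * (Nat.sqrt N + 1) := Nat.lt_succ_sqrt N
  nlinarith [sq_nonneg s, sq_nonneg (Nat.sqrt N)]

lemma coercive_quad (a b c : ℤ) (ha : 1 ≤ a) (hc : 1 ≤ c)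
    (hbD : 0 ≤ b ∨ b ^ 2 - a * c < 0) :
    ∀ x y : ℤ, 0 ≤ x → 0 ≤ y →
      x ^ 2 + y ^ 2 ≤ 2 * (a * c) * (a * x ^ 2 + 2 * b * x * y + c * y ^ 2) := by
  intro x y hx hy
  rcases hbD with hb | hD
  · have hac : (1:ℤ) ≤ a * c := by nlinarith [mul_le_mul ha hc (by norm_num : (0:ℤ) ≤ 1) (by linarith : (0:ℤ) ≤ a)]
    have hca : (1:ℤ) ≤ a * c * a := by nlinarith [mul_le_mul hac ha (by norm_num : (0:ℤ) ≤ 1) (by linarith : (0:ℤ) ≤ a * c)]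
    have hcc : (1:ℤ) ≤ a * c * c := by nlinarith [mul_le_mul hac hc (by norm_num : (0:ℤ) ≤ 1) (by linarith : (0:ℤ) ≤ a * c)]
    have h1 : x ^ 2 ≤ a * c * a * x ^ 2 := le_mul_of_one_le_left (sq_nonneg x) hca
    have h2 : y ^ 2 ≤ a * c * c * y ^ 2 := le_mul_of_one_le_left (sq_nonneg y) hcc
    have h3 : (0:ℤ) ≤ a * c * (2 * b * x * y) := by
      have := mul_nonneg (mul_nonneg (mul_nonneg (by linarith : (0:ℤ) ≤ 2 * b) hx) hy)
        (mul_nonneg (by linarith : (0:ℤ) ≤ a) (by linarith : (0:ℤ) ≤ c))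
      nlinarith
    nlinarith [h1, h2, h3]
  · nlinarith [mul_nonneg (by linarith : (0:ℤ) ≤ c) (sq_nonneg (a * x + b * y)),
      mul_nonneg (by linarith : (0:ℤ) ≤ a) (sq_nonneg (b * x + c * y)),
      mul_nonneg (by nlinarith : (0:ℤ) ≤ a * c - b ^ 2 - 1) (sq_nonneg x),
      mul_nonneg (by nlinarith : (0:ℤ) ≤ a * c - b ^ 2 - 1) (sq_nonneg y),
      sq_nonneg x, sq_nonneg y]

lemma aniso {p : ℕ} [Fact p.Prime] {Dp : ZMod p} (h : ¬ IsSquare Dp) :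
    ∀ X Y : ZMod p, X ^ 2 = Dp * Y ^ 2 → X = 0 ∧ Y = 0 := by
  intro X Y hXY
  have hY : Y = 0 := by
    by_contra hY
    apply h
    refine ⟨X * Y⁻¹, ?_⟩
    field_simp
    linear_combination -hXY
  subst hY
  refine ⟨?_, rfl⟩
  have : X ^ 2 = 0 := by rw [hXY]; ring
  exact pow_eq_zero_iff (n := 2) (by norm_num) |>.mp this

lemma sqrt_mul_le (K N : ℕ) (hK : 1 ≤ K) : Nat.sqrt (K * N) ≤ K * (Nat.sqrt N + 1) := by
  have h1 : K * N ≤ (K * (Nat.sqrt N + 1)) * (K * (Nat.sqrt N + 1)) := by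
    have h2 : N ≤ (Nat.sqrt N + 1) * (Nat.sqrt N + 1) := le_of_lt (Nat.lt_succ_sqrt N)
    calc K * N ≤ K * ((Nat.sqrt N + 1) * (Nat.sqrt N + 1)) := Nat.mul_le_mul_left _ h2
      _ ≤ _ := by nlinarith
  calc Nat.sqrt (K * N) ≤ Nat.sqrt ((K * (Nat.sqrt N + 1)) * (K * (Nat.sqrt N + 1))) :=
        Nat.sqrt_le_sqrt h1
    _ = K * (Nat.sqrt N + 1) := Nat.sqrt_eq _


lemma coprime_of_mod_eq_one {a w : ℕ} (h : a % w = 1 % w) : Nat.Coprime a w := by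
  have h1 : a ≡ 1 [MOD w] := h
  simpa [Nat.Coprime] using Nat.ModEq.gcd_eq h1

lemma exists_jacobi_neg_one (D : ℤ) (hD : ¬ IsSquare D) :
    ∃ b₀ : ℕ, b₀ % 2 = 1 ∧ Nat.Coprime b₀ (4 * D.natAbs) ∧ jacobiSym D b₀ = -1 := by
  have hD0 : D ≠ 0 := by rintro rfl; exact hD ⟨0, by ring⟩
  set n := D.natAbs with hn
  have hn0 : n ≠ 0 := Int.natAbs_ne_zero.mpr hD0
  set α := n.factorization 2 with hα
  set m := n / 2 ^ α with hm
  have hnm : 2 ^ α * m = n := Nat.ordProj_mul_ordCompl_eq_self n 2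
  have hm2 : ¬ (2 ∣ m) := Nat.not_dvd_ordCompl Nat.prime_two hn0
  have hmodd : m % 2 = 1 := Nat.two_dvd_ne_zero.mp hm2
  have hsign : D.sign = 1 ∨ D.sign = -1 := by
    rcases Int.lt_or_lt_of_ne hD0 with h | h
    · right; exact Int.sign_eq_neg_one_of_neg h
    · left; exact Int.sign_eq_one_of_pos h
  by_cases hsq : IsSquare m
  · -- Case A : m = w * w
    obtain ⟨w, hw⟩ := hsq
    have hwodd : w % 2 = 1 := by
      rcases Nat.even_or_odd w with h | h
      · exfalso; exact hm2 (hw ▸ (Dvd.dvd.mul_right h.two_dvd w))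
      · exact Nat.odd_iff.mp h
    have hw8 : Nat.Coprime w 8 := by
      have : Nat.Coprime 2 w := Nat.coprime_two_left.mpr (Nat.odd_iff.mpr hwodd)
      simpa using this.symm.pow_right 3
    have hkey : ¬ (D.sign = 1 ∧ Even α) := by
      rintro ⟨hs, j, hj⟩
      apply hD
      refine ⟨((2 ^ j * w : ℕ) : ℤ), ?_⟩
      have hnat : n = (2 ^ j * w) * (2 ^ j * w) := by rw [← hnm, hw, hj]; ring
      calc D = D.sign * (n : ℤ) := (Int.sign_mul_natAbs D).symm
        _ = (n : ℤ) := by rw [hs, one_mul]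
        _ = ((2 ^ j * w : ℕ) : ℤ) * ((2 ^ j * w : ℕ) : ℤ) := by exact_mod_cast congrArg (Nat.cast (R := ℤ)) hnat
    set r₈ : ℕ := if D.sign = 1 then 5 else if Even α then 3 else 5 with hr₈
    obtain ⟨b₀, hb₁, hb₂⟩ := Nat.chineseRemainder hw8.symm r₈ 1
    have hb8 : b₀ % 8 = r₈ % 8 := hb₁
    have hr85 : r₈ = 3 ∨ r₈ = 5 := by rw [hr₈]; split_ifs <;> simp
    have hb2 : b₀ % 2 = 1 := by rcases hr85 with h | h <;> omega
    have hbodd : Odd b₀ := Nat.odd_iff.mpr hb2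
    have hcopw : Nat.Coprime b₀ w := coprime_of_mod_eq_one hb₂
    have hcop2 : Nat.Coprime b₀ 2 := Nat.coprime_two_right.mpr hbodd
    refine ⟨b₀, hb2, ?_, ?_⟩
    · -- coprime to 4 * n
      have h4n : 4 * n = 2 ^ (α + 2) * (w * w) := by rw [← hnm, hw]; ring
      rw [h4n]
      exact Nat.Coprime.mul_right (hcop2.pow_right _) (Nat.Coprime.mul_right hcopw hcopw)
    · -- Jacobi symbol
      have hDfact : D = D.sign * ((2 : ℤ) ^ α * ((w : ℤ)) ^ 2) := by
        calc D = D.sign * (n : ℤ) := (Int.sign_mul_natAbs D).symm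
          _ = _ := by
            congr 1
            have : n = 2 ^ α * w ^ 2 := by rw [← hnm, hw]; ring
            rw [this]; push_cast; ring
      rw [hDfact, jacobiSym.mul_left, jacobiSym.mul_left, jacobiSym.pow_left, jacobiSym.pow_left]
      have hw1 : jacobiSym (w : ℤ) b₀ ^ 2 = 1 := by
        apply jacobiSym.sq_one
        simpa [Int.gcd_natCast_natCast] using hcopw.symm.gcd_eq_one
      have h2 : jacobiSym 2 b₀ = -1 := by
        rw [jacobiSym.at_two hbodd, ZMod.χ₈_nat_eq_if_mod_eight]
        rcases hr85 with h | h <;> simp [hb2, hb8, h]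
      rcases hsign with hs | hs
      · have hαodd : ¬ Even α := fun h => hkey ⟨hs, h⟩
        have hr : r₈ = 5 := by rw [hr₈, if_pos hs]
        rw [hs, jacobiSym.one_left, h2]
        rw [Odd.neg_one_pow (Nat.not_even_iff_odd.mp hαodd)]
        rw [hw1]; ring
      · have hr4 : b₀ % 4 = r₈ % 4 := by omega
        have hχ₄ : jacobiSym (-1) b₀ = (if Even α then -1 else 1) := by
          rw [jacobiSym.at_neg_one hbodd, ZMod.χ₄_nat_eq_if_mod_four]
          rw [hr₈, if_neg (by rw [hs]; norm_num)] at hr4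
          by_cases h : Even α
          · rw [if_pos h] at hr4
            simp [h, show ¬ (b₀ % 2 = 0) by omega, show ¬ (b₀ % 4 = 1) by omega]
          · rw [if_neg h] at hr4
            simp [h, show ¬ (b₀ % 2 = 0) by omega, show b₀ % 4 = 1 by omega]
        rw [hs, hχ₄, h2, hw1]
        split_ifs with h
        · rw [h.neg_one_pow]; ring
        · rw [Odd.neg_one_pow (Nat.not_even_iff_odd.mp h)]; ring
  · -- Case B : m has a prime with odd multiplicity
    have hm0 : m ≠ 0 := by rintro h; rw [h] at hm2; exact hm2 (dvd_zero 2)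
    obtain ⟨aSF, bSF, hab, hsf⟩ := Nat.sq_mul_squarefree m
    have haSF1 : aSF ≠ 1 := by rintro rfl; exact hsq ⟨bSF, by rw [← hab]; ring⟩
    have haSF0 : aSF ≠ 0 := by rintro rfl; rw [mul_zero] at hab; exact hm0 hab.symm
    have hbSF0 : bSF ≠ 0 := by rintro rfl; simp at hab; exact hm0 hab.symm
    obtain ⟨q, hq, hqa⟩ := Nat.exists_prime_and_dvd haSF1
    have hqm : q ∣ m := hab ▸ Dvd.dvd.mul_left hqa _
    have hq2 : q ≠ 2 := by rintro rfl; exact hm2 hqm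
    have hqodd : Odd q := hq.odd_of_ne_two hq2
    have hβodd : Odd (m.factorization q) := by
      have h1 : m.factorization q = 2 * bSF.factorization q + aSF.factorization q := by
        rw [← hab, Nat.factorization_mul (pow_ne_zero 2 hbSF0) haSF0,
          Nat.factorization_pow]
        simp [mul_comm]
      have h2 : aSF.factorization q = 1 := by
        have hle := hsf.natFactorization_le_one q
        have hge := hq.factorization_pos_of_dvd haSF0 hqa
        omega
      rw [h1, h2]
      exact ⟨bSF.factorization q, by ring⟩
    set β := m.factorization q with hβ
    set R := m / q ^ β with hR
    have hmR : q ^ β * R = m := Nat.ordProj_mul_ordCompl_eq_self m q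
    have hqR : ¬ q ∣ R := Nat.not_dvd_ordCompl hq hm0
    have hRm : R ∣ m := ⟨q ^ β, by rw [← hmR]; ring⟩
    have hR2 : ¬ (2 ∣ R) := fun h => hm2 (h.trans hRm)
    have hRodd : Odd R := Nat.odd_iff.mpr (Nat.two_dvd_ne_zero.mp hR2)
    have hR0 : R ≠ 0 := by rintro h; rw [h] at hR2; exact hR2 (dvd_zero 2)
    haveI : Fact q.Prime := ⟨hq⟩
    obtain ⟨ζ, hζ⟩ := FiniteField.exists_nonsquare (F := ZMod q)
      (by rw [ZMod.ringChar_zmod_n]; exact hq2)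
    set nq := ζ.val with hnq
    have hnqζ : ((nq : ℕ) : ZMod q) = ζ := by
      rw [hnq, ZMod.natCast_val, ZMod.cast_id]
    have hcop8q : Nat.Coprime 8 q := by
      have : Nat.Coprime 2 q := Nat.coprime_two_left.mpr hqodd
      simpa using this.pow_left 3
    obtain ⟨k₁, hk₁, hk₂⟩ := Nat.chineseRemainder hcop8q 1 nq
    have hcop8qR : Nat.Coprime (8 * q) R := by
      refine Nat.Coprime.mul ?_ ((hq.coprime_iff_not_dvd).mpr hqR)
      have : Nat.Coprime 2 R := Nat.coprime_two_left.mpr hRodd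
      simpa using this.pow_left 3
    obtain ⟨b₀, hb₁, hb₂⟩ := Nat.chineseRemainder hcop8qR k₁ 1
    have hb8 : b₀ % 8 = 1 := by
      have h8 : b₀ ≡ k₁ [MOD 8] := hb₁.of_dvd ⟨q, rfl⟩
      have : b₀ ≡ 1 [MOD 8] := h8.trans hk₁
      simpa [Nat.ModEq] using this
    have hbq : b₀ ≡ nq [MOD q] := (hb₁.of_dvd ⟨8, by ring⟩).trans hk₂
    have hb2 : b₀ % 2 = 1 := by omega
    have hbodd : Odd b₀ := Nat.odd_iff.mpr hb2
    have hζ0 : ζ ≠ 0 := by rintro rfl; exact hζ ⟨0, by ring⟩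
    have hqb : ¬ q ∣ b₀ := by
      intro h
      apply hζ0
      rw [← hnqζ, ← (ZMod.natCast_eq_natCast_iff _ _ _).mpr hbq]
      exact (ZMod.natCast_eq_zero_iff _ _).mpr h
    have hcopq : Nat.Coprime b₀ q := ((hq.coprime_iff_not_dvd).mpr hqb).symm
    have hcopR : Nat.Coprime b₀ R := coprime_of_mod_eq_one hb₂
    have hcop2 : Nat.Coprime b₀ 2 := Nat.coprime_two_right.mpr hbodd
    refine ⟨b₀, hb2, ?_, ?_⟩
    · have h4n : 4 * n = 2 ^ (α + 2) * (q ^ β * R) := by rw [← hnm, ← hmR]; ring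
      rw [h4n]
      exact Nat.Coprime.mul_right (hcop2.pow_right _)
        (Nat.Coprime.mul_right (hcopq.pow_right _) hcopR)
    · have hDfact : D = D.sign * ((2 : ℤ) ^ α * ((q : ℤ)) ^ β * ((R : ℤ))) := by
        calc D = D.sign * (n : ℤ) := (Int.sign_mul_natAbs D).symm
          _ = _ := by
            congr 1
            have : n = 2 ^ α * q ^ β * R := by rw [← hnm, ← hmR]; ring
            rw [this]; push_cast; ring
      rw [hDfact, jacobiSym.mul_left, jacobiSym.mul_left, jacobiSym.mul_left,
        jacobiSym.pow_left, jacobiSym.pow_left]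
      have hsgn : jacobiSym D.sign b₀ = 1 := by
        rcases hsign with hs | hs
        · rw [hs, jacobiSym.one_left]
        · rw [hs, jacobiSym.at_neg_one hbodd, ZMod.χ₄_nat_eq_if_mod_four]
          have h4 : b₀ % 4 = 1 := by omega
          simp [h4, show ¬ (b₀ % 2 = 0) by omega]
      have h2 : jacobiSym 2 b₀ = 1 := by
        rw [jacobiSym.at_two hbodd, ZMod.χ₈_nat_eq_if_mod_eight]
        simp [hb8, show ¬ (b₀ % 2 = 0) by omega]
      have hJq : jacobiSym (q : ℤ) b₀ = -1 := by
        rw [← jacobiSym.quadratic_reciprocity_one_mod_four (by omega) hqodd]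
        rw [ZMod.nonsquare_iff_jacobiSym_eq_neg_one (p := q)]
        intro hsqb
        apply hζ
        have hcast : (((b₀ : ℕ) : ℤ) : ZMod q) = ζ := by
          push_cast
          rw [(ZMod.natCast_eq_natCast_iff _ _ _).mpr hbq, hnqζ]
        rwa [hcast] at hsqb
      have hJR : jacobiSym (R : ℤ) b₀ = 1 := by
        rw [← jacobiSym.quadratic_reciprocity_one_mod_four (by omega) hRodd]
        have : ((b₀ : ℤ)) % (R : ℤ) = ((1 : ℤ)) % (R : ℤ) := by
          have h : ((b₀ % R : ℕ) : ℤ) = ((1 % R : ℕ) : ℤ) := by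
            exact_mod_cast congrArg (fun t : ℕ => (t : ℤ)) hb₂
          rw [Int.natCast_mod, Int.natCast_mod] at h
          simpa using h
        rw [jacobiSym.mod_left' this, jacobiSym.one_left]
      rw [hsgn, h2, hJq, hJR, Odd.neg_one_pow hβodd]
      simp


lemma exists_prime_nonsquare (D : ℤ) (hD : ¬ IsSquare D) (M : ℕ) :
    ∃ p : ℕ, p.Prime ∧ M < p ∧ ¬ IsSquare ((D : ZMod p)) := by
  have hD0 : D ≠ 0 := by rintro rfl; exact hD ⟨0, by ring⟩
  have hn0 : D.natAbs ≠ 0 := Int.natAbs_ne_zero.mpr hD0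
  obtain ⟨b₀, hbodd, hbcop, hbJ⟩ := exists_jacobi_neg_one D hD
  haveI : NeZero (4 * D.natAbs) := ⟨by positivity⟩
  have hunit : IsUnit ((b₀ : ZMod (4 * D.natAbs))) :=
    (ZMod.isUnit_iff_coprime b₀ (4 * D.natAbs)).mpr hbcop
  obtain ⟨p, hpM, hp, hpcast⟩ := Nat.forall_exists_prime_gt_and_eq_mod hunit M
  have hmod : p ≡ b₀ [MOD 4 * D.natAbs] := (ZMod.natCast_eq_natCast_iff _ _ _).mp hpcast
  have hpodd : p % 2 = 1 := by
    have h2 : p ≡ b₀ [MOD 2] := hmod.of_dvd ⟨2 * D.natAbs, by ring⟩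
    unfold Nat.ModEq at h2; omega
  have hJp : jacobiSym D p = -1 := by
    rw [jacobiSym.mod_right D (Nat.odd_iff.mpr hpodd), hmod, ← jacobiSym.mod_right D (Nat.odd_iff.mpr hbodd), hbJ]
  haveI : Fact p.Prime := ⟨hp⟩
  exact ⟨p, hp, hpM, ZMod.nonsquare_of_jacobiSym_eq_neg_one hJp⟩


lemma shift_residue (p u r x : ℕ) (hu : u < p) (hr : r < p) (hx : x % p = r) :
    (x + (u + (p - r)) % p) % p = u := by
  have h1 : (x + (u + (p - r)) % p) % p = (r + (u + (p - r))) % p := by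
    conv_lhs => rw [Nat.add_mod, hx, Nat.mod_mod_of_dvd _ dvd_rfl]
    conv_rhs => rw [Nat.add_mod, Nat.mod_eq_of_lt hr]
  rw [h1, show r + (u + (p - r)) = u + p by omega, Nat.add_mod_right, Nat.mod_eq_of_lt hu]

lemma counting_contradiction
    (p : ℕ) (hp3 : 3 ≤ p)
    (ν : ℕ × ℕ → ℕ) (hinj : Function.Injective ν) (hsurj : ∀ n : ℕ, ∃ q, ν q = n)
    (x₀v y₀v r₀v : ℕ) (hx₀ : x₀v < p) (hy₀ : y₀v < p) (hr₀ : r₀v < p)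
    (hclass : ∀ x y : ℕ, ν (x, y) % p = r₀v → x % p = x₀v ∧ y % p = y₀v)
    (CR CE : ℕ)
    (hcoer : ∀ x y N : ℕ, ν (x, y) < N → x + y ≤ CR * (Nat.sqrt N + 1) + CR)
    (hshift : ∀ x y δ ε S : ℕ, δ < p → ε < p → x + y ≤ S →
      ν (x + δ, y + ε) ≤ ν (x, y) + (CE * S + CE)) : False := by
  classical
  have hp0 : 0 < p := by omega
  obtain ⟨g, hg⟩ : ∃ g : ℕ → ℕ × ℕ, ∀ n, ν (g n) = n :=
    ⟨fun n => Classical.choose (hsurj n), fun n => Classical.choose_spec (hsurj n)⟩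
  obtain ⟨T, hT⟩ : ∃ T : ℕ, T = 3 * p + 3 * CE * CR + CE + 1 := ⟨_, rfl⟩
  obtain ⟨N, hN⟩ : ∃ N : ℕ, N = T ^ 2 := ⟨_, rfl⟩
  have hsqrtN : Nat.sqrt N = T := by rw [hN, sq]; exact Nat.sqrt_eq T
  obtain ⟨S, hS⟩ : ∃ S : ℕ, S = CR * (T + 1) + CR := ⟨_, rfl⟩
  obtain ⟨E, hE⟩ : ∃ E : ℕ, E = CE * S + CE := ⟨_, rfl⟩
  have hkey : ∀ k, k < N / p →
      (r₀v + k * p < N ∧ (g (r₀v + k * p)).1 % p = x₀v ∧ (g (r₀v + k * p)).2 % p = y₀v) := by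
    intro k hk
    have h1 : (k + 1) * p ≤ N := by
      have h2 : k + 1 ≤ N / p := hk
      calc (k + 1) * p ≤ (N / p) * p := Nat.mul_le_mul_right _ h2
        _ ≤ N := Nat.div_mul_le_self _ _
    have hlt : r₀v + k * p < N := by nlinarith
    have hmod : ν ((g (r₀v + k * p)).1, (g (r₀v + k * p)).2) % p = r₀v := by
      rw [Prod.mk.eta, hg, Nat.add_mul_mod_self_right, Nat.mod_eq_of_lt hr₀]
    obtain ⟨hx, hy⟩ := hclass _ _ hmod
    exact ⟨hlt, hx, hy⟩
  have hmapsto : ∀ t ∈ ((Finset.range p ×ˢ Finset.range p) ×ˢ Finset.range (N / p)),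
      (ν ((g (r₀v + t.2 * p)).1 + (t.1.1 + (p - x₀v)) % p,
          (g (r₀v + t.2 * p)).2 + (t.1.2 + (p - y₀v)) % p)) ∈ Finset.range (N + E) := by
    rintro ⟨⟨u, v⟩, k⟩ ht
    simp only [Finset.mem_product, Finset.mem_range] at ht
    obtain ⟨⟨hu, hv⟩, hk⟩ := ht
    obtain ⟨hlt, hx, hy⟩ := hkey k hk
    have hxy : (g (r₀v + k * p)).1 + (g (r₀v + k * p)).2 ≤ S := by
      have h5 := hcoer (g (r₀v + k * p)).1 (g (r₀v + k * p)).2 N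
        (by rw [Prod.mk.eta, hg]; exact hlt)
      rw [hsqrtN] at h5
      omega
    have h6 := hshift (g (r₀v + k * p)).1 (g (r₀v + k * p)).2
      ((u + (p - x₀v)) % p) ((v + (p - y₀v)) % p) S
      (Nat.mod_lt _ hp0) (Nat.mod_lt _ hp0) hxy
    rw [Prod.mk.eta, hg] at h6
    simp only [Finset.mem_range]
    omega
  have hinjon : Set.InjOn (fun t : (ℕ × ℕ) × ℕ =>
      ν ((g (r₀v + t.2 * p)).1 + (t.1.1 + (p - x₀v)) % p,
         (g (r₀v + t.2 * p)).2 + (t.1.2 + (p - y₀v)) % p))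
      (↑((Finset.range p ×ˢ Finset.range p) ×ˢ Finset.range (N / p)) :
        Set ((ℕ × ℕ) × ℕ)) := by
    rintro ⟨⟨u, v⟩, k⟩ ht ⟨⟨u', v'⟩, k'⟩ ht' heq
    simp only [Finset.mem_coe, Finset.mem_product, Finset.mem_range] at ht ht'
    obtain ⟨⟨hu, hv⟩, hk⟩ := ht
    obtain ⟨⟨hu', hv'⟩, hk'⟩ := ht'
    obtain ⟨-, hx, hy⟩ := hkey k hk
    obtain ⟨-, hx', hy'⟩ := hkey k' hk'
    simp only at heq
    have hpair := hinj heq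
    have h1 : (g (r₀v + k * p)).1 + (u + (p - x₀v)) % p
        = (g (r₀v + k' * p)).1 + (u' + (p - x₀v)) % p := congrArg Prod.fst hpair
    have h2 : (g (r₀v + k * p)).2 + (v + (p - y₀v)) % p
        = (g (r₀v + k' * p)).2 + (v' + (p - y₀v)) % p := congrArg Prod.snd hpair
    have hu1 : u = u' := by
      have e1 := shift_residue p u x₀v _ hu hx₀ hx
      have e2 := shift_residue p u' x₀v _ hu' hx₀ hx'
      rw [← e1, ← e2, h1]
    have hv1 : v = v' := by
      have e1 := shift_residue p v y₀v _ hv hy₀ hy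
      have e2 := shift_residue p v' y₀v _ hv' hy₀ hy'
      rw [← e1, ← e2, h2]
    subst hu1; subst hv1
    have hxx : (g (r₀v + k * p)).1 = (g (r₀v + k' * p)).1 := by omega
    have hyy : (g (r₀v + k * p)).2 = (g (r₀v + k' * p)).2 := by omega
    have hgg : g (r₀v + k * p) = g (r₀v + k' * p) := Prod.ext hxx hyy
    have hnk : r₀v + k * p = r₀v + k' * p := by
      rw [← hg (r₀v + k * p), ← hg (r₀v + k' * p), hgg]
    have hkk : k = k' := by
      have : k * p = k' * p := by omega
      exact Nat.eq_of_mul_eq_mul_right hp0 this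
    simp [hkk]
  have hcard := Finset.card_le_card_of_injOn _ hmapsto hinjon
  simp only [Finset.card_product, Finset.card_range] at hcard
  -- final arithmetic contradiction
  have hdiv : p * (N / p) + p > N := by
    have h7 := Nat.div_add_mod N p
    have h8 := Nat.mod_lt N hp0
    omega
  have h3 : 3 * (p * (N / p)) ≤ p * (p * (N / p)) :=
    Nat.mul_le_mul_right _ hp3
  have hfinal : 3 * (N - p) ≤ N + E := by
    calc 3 * (N - p) ≤ 3 * (p * (N / p)) := by omega
      _ ≤ p * (p * (N / p)) := h3
      _ = p * p * (N / p) := by ring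
      _ ≤ N + E := hcard
  have hE' : E = CE * CR * T + 2 * CE * CR + CE := by rw [hE, hS]; ring
  have hTp : p ≤ T := by omega
  have hNT : T ≤ N := by nlinarith
  have h2T : 2 * T ^ 2 ≤ 3 * p + E := by omega
  rw [hE'] at h2T
  nlinarith


set_option maxHeartbeats 1000000 in
theorem master (a b c d e : ℤ) (f : ℕ) (ha : 1 ≤ a) (hc : 1 ≤ c)
    (hbD : 0 ≤ b ∨ b ^ 2 - a * c < 0)
    (ν : ℕ × ℕ → ℕ)
    (hν : ∀ x y : ℕ, (2 * ν (x, y) : ℤ)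
      = a * x ^ 2 + 2 * b * x * y + c * y ^ 2 + d * x + e * y + 2 * f)
    (hinj : Function.Injective ν) (hsurj : ∀ n : ℕ, ∃ q, ν q = n)
    (hDns : ¬ IsSquare (b ^ 2 - a * c)) : False := by
  obtain ⟨p, hp, hpM, hDp⟩ := exists_prime_nonsquare _ hDns (2 * a.natAbs)
  haveI : Fact p.Prime := ⟨hp⟩
  have hp2 : 2 * a.natAbs < p := hpM
  have ha1 : 1 ≤ a.natAbs := by
    rcases Int.natAbs_eq a with h | h <;> omega
  have hpa : ¬ ((p : ℤ) ∣ a) := by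
    intro h
    have h2 : p ∣ a.natAbs := by
      have := Int.natAbs_dvd_natAbs.mpr h
      simpa using this
    have := Nat.le_of_dvd (by omega) h2
    omega
  have hA : ((a : ZMod p)) ≠ 0 := by
    rw [Ne, ZMod.intCast_zmod_eq_zero_iff_dvd]; exact hpa
  have h2K : (2 : ZMod p) ≠ 0 := by
    have : ((2 : ℕ) : ZMod p) ≠ 0 := by
      rw [Ne, ZMod.natCast_eq_zero_iff]
      intro h
      have := (Nat.prime_dvd_prime_iff_eq hp Nat.prime_two).mp h
      omega
    simpa using this
  set K := ZMod p
  set A : K := ((a : ℤ) : K) with hAdef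
  set B : K := ((b : ℤ) : K) with hBdef
  set C : K := ((c : ℤ) : K) with hCdef
  set dd : K := ((d : ℤ) : K) with hdddef
  set ee : K := ((e : ℤ) : K) with heedef
  set Dbar : K := ((b ^ 2 - a * c : ℤ) : K) with hDdef
  have hDbar : Dbar = B ^ 2 - A * C := by rw [hDdef, hAdef, hBdef, hCdef]; push_cast; rw [Int.cast_mul (α := ZMod p)]
  have hD0 : Dbar ≠ 0 := by
    intro h
    exact hDp (by rw [h]; exact ⟨0, by ring⟩)
  set w : K := (B * dd - A * ee) * Dbar⁻¹ with hwdef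
  have hw : Dbar * w = B * dd - A * ee := by
    rw [hwdef, mul_comm, mul_assoc, inv_mul_cancel₀ hD0, mul_one]
  have h8A : (8 : K) * A ≠ 0 := by
    have h8 : (8 : K) ≠ 0 := by
      have : (8 : K) = 2 ^ 3 := by norm_num
      rw [this]
      exact pow_ne_zero 3 h2K
    exact mul_ne_zero h8 hA
  set r₀ : K := (Dbar * w ^ 2 + 8 * A * (f : K) - dd ^ 2) * ((8 : K) * A)⁻¹ with hr₀def
  have hr₀ : (8 : K) * A * r₀ = Dbar * w ^ 2 + 8 * A * (f : K) - dd ^ 2 := by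
    rw [hr₀def, mul_comm, mul_assoc, inv_mul_cancel₀ h8A, mul_one]
  have hid : ∀ x y : ℕ, (8 : K) * A * ((ν (x, y) : ℕ) : K)
      = (2 * A * (x : K) + 2 * B * (y : K) + dd) ^ 2
        - Dbar * ((2 * (y : K)) + w) ^ 2 + Dbar * w ^ 2 + 8 * A * (f : K) - dd ^ 2 := by
    intro x y
    have h0 := hν x y
    have hcast : (2 : K) * ((ν (x, y) : ℕ) : K)
        = A * (x : K) ^ 2 + 2 * B * (x : K) * (y : K) + C * (y : K) ^ 2
          + dd * (x : K) + ee * (y : K) + 2 * (f : K) := by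
      have := congrArg (fun t : ℤ => ((t : ℤ) : K)) h0
      push_cast at this
      rw [hAdef, hBdef, hCdef, hdddef, heedef]
      push_cast
      simp only [K] at this ⊢
      convert this using 2 <;> push_cast <;> ring
    rw [hDbar] at hw ⊢
    simp only [K] at *
    linear_combination (4 * A) * hcast + (4 * (y : K)) * hw
  -- the distinguished point
  have h2A : (2 : K) * A ≠ 0 := mul_ne_zero h2K hA
  set y₀ : K := -w * (2 : K)⁻¹ with hy₀def
  set x₀ : K := (-(2 * B * y₀) - dd) * ((2 : K) * A)⁻¹ with hx₀def
  have key : ∀ x y : ℕ, ((ν (x, y) : ℕ) : K) = r₀ → (x : K) = x₀ ∧ (y : K) = y₀ := by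
    intro x y h
    have hid' := hid x y
    rw [h, hr₀] at hid'
    have hXY : (2 * A * (x : K) + 2 * B * (y : K) + dd) ^ 2
        = Dbar * ((2 * (y : K)) + w) ^ 2 := by
      show (_ : ZMod p) = _
      linear_combination - hid'
    obtain ⟨hX0, hY0⟩ := aniso hDp _ _ hXY
    have hy : (y : K) = y₀ := by
      rw [hy₀def]
      rw [eq_mul_inv_iff_mul_eq₀ h2K]
      linear_combination hY0
    refine ⟨?_, hy⟩
    rw [hx₀def]
    rw [eq_mul_inv_iff_mul_eq₀ h2A]
    linear_combination (norm := ring1) hX0 - 2 * B * hy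
  haveI : NeZero p := ⟨hp.pos.ne'⟩
  have hclass : ∀ x y : ℕ, ν (x, y) % p = r₀.val → x % p = x₀.val ∧ y % p = y₀.val := by
    intro x y h
    have hcast : ((ν (x, y) : ℕ) : K) = r₀ := by
      have h9 : ((ν (x, y) : ℕ) : K) = ((ν (x, y) % p : ℕ) : K) := by
        have h10 := congrArg (fun t : ℕ => (t : K)) (Nat.div_add_mod (ν (x, y)) p)
        push_cast at h10
        rw [Nat.cast_mul (α := ZMod p), ZMod.natCast_self] at h10
        simpa using h10.symm
      rw [h9, h]
      rw [ZMod.natCast_val, ZMod.cast_id]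
    obtain ⟨hx, hy⟩ := key x y hcast
    constructor
    · rw [← ZMod.val_natCast, hx]
    · rw [← ZMod.val_natCast, hy]
  -- natural number constants
  obtain ⟨aN, haN⟩ : ∃ t : ℕ, (t : ℤ) = a := ⟨a.toNat, Int.toNat_of_nonneg (by omega)⟩
  obtain ⟨cN, hcN⟩ : ∃ t : ℕ, (t : ℤ) = c := ⟨c.toNat, Int.toNat_of_nonneg (by omega)⟩
  obtain ⟨bN, hbN1, hbN2⟩ : ∃ t : ℕ, b ≤ (t : ℤ) ∧ -(t : ℤ) ≤ b := by
    refine ⟨b.natAbs, ?_, ?_⟩ <;>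
    · have hb : |b| ≤ ((b.natAbs : ℕ) : ℤ) := by rw [Int.abs_eq_natAbs]
      cases' abs_le.mp hb with h1 h2
      omega
  obtain ⟨mN, hd1, hd2, he1, he2⟩ :
      ∃ t : ℕ, d ≤ (t : ℤ) ∧ -(t : ℤ) ≤ d ∧ e ≤ (t : ℤ) ∧ -(t : ℤ) ≤ e := by
    refine ⟨max d.natAbs e.natAbs, ?_, ?_, ?_, ?_⟩ <;>
    · have hd : |d| ≤ ((max d.natAbs e.natAbs : ℕ) : ℤ) := by
        rw [Int.abs_eq_natAbs]; exact_mod_cast le_max_left _ _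
      have he : |e| ≤ ((max d.natAbs e.natAbs : ℕ) : ℤ) := by
        rw [Int.abs_eq_natAbs]; exact_mod_cast le_max_right _ _
      cases' abs_le.mp hd with h1 h2
      cases' abs_le.mp he with h3 h4
      omega
  have haN1 : 1 ≤ aN := by omega
  have hcN1 : 1 ≤ cN := by omega
  have hacN1 : 1 ≤ aN * cN := Nat.one_le_iff_ne_zero.mpr (by positivity)
  -- coercivity
  have hcoer : ∀ x y N : ℕ, ν (x, y) < N →
      x + y ≤ (4 * (aN * cN) * mN + 4 * (aN * cN) + 2) * (Nat.sqrt N + 1)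
        + (4 * (aN * cN) * mN + 4 * (aN * cN) + 2) := by
    intro x y N hlt
    have hq := coercive_quad a b c ha hc hbD x y (by positivity) (by positivity)
    have h0 := hν x y
    have hltZ : ((ν (x, y) : ℕ) : ℤ) < N := by exact_mod_cast hlt
    have hfZ : (0 : ℤ) ≤ (f : ℤ) := by positivity
    have hxZ : (0 : ℤ) ≤ (x : ℤ) := by positivity
    have hyZ : (0 : ℤ) ≤ (y : ℤ) := by positivity
    have hQle : a * (x : ℤ) ^ 2 + 2 * b * x * y + c * y ^ 2
        ≤ 2 * N + mN * ((x : ℤ) + y) := by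
      nlinarith [mul_nonneg (by linarith : (0:ℤ) ≤ d + mN) hxZ,
        mul_nonneg (by linarith : (0:ℤ) ≤ e + mN) hyZ]
    have hac : (1 : ℤ) ≤ a * c := by
      nlinarith [mul_le_mul ha hc (by norm_num : (0:ℤ) ≤ 1) (by linarith : (0:ℤ) ≤ a)]
    have h1 : (x : ℤ) ^ 2 + y ^ 2 ≤ 2 * (a * c) * (2 * N + mN * ((x : ℤ) + y)) := by
      refine le_trans hq ?_
      exact mul_le_mul_of_nonneg_left hQle (by linarith)
    have h2 : ((x : ℤ) + y) ^ 2 ≤ 4 * (2 * (a * c) * N) + 2 * (2 * (a * c) * mN) * ((x : ℤ) + y) := by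
      nlinarith [sq_nonneg ((x : ℤ) - y)]
    have h3 : (x + y) ^ 2 ≤ 4 * (2 * (aN * cN) * N) + 2 * (2 * (aN * cN) * mN) * (x + y) := by
      have hcast : ((aN * cN : ℕ) : ℤ) = a * c := by push_cast [haN, hcN]; ring
      zify
      calc ((x + y : ℕ) : ℤ) ^ 2 = ((x : ℤ) + y) ^ 2 := by push_cast; ring
        _ ≤ 4 * (2 * (a * c) * N) + 2 * (2 * (a * c) * mN) * ((x : ℤ) + y) := h2
        _ = _ := by rw [← hcast]; push_cast; ring
    have h4 := sqrt_quad_bound (x + y) (2 * (aN * cN) * mN) (2 * (aN * cN) * N) h3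
    have h5 : Nat.sqrt (2 * (aN * cN) * N) ≤ 2 * (aN * cN) * (Nat.sqrt N + 1) := by
      have := sqrt_mul_le (2 * (aN * cN)) N (by omega)
      omega
    nlinarith [h4, h5, Nat.zero_le ((4 * (aN * cN) * mN + 2) * Nat.sqrt N),
      Nat.zero_le ((aN * cN) * Nat.sqrt N)]
  -- shift bound
  obtain ⟨CE, hCE⟩ : ∃ t : ℕ,
      t = (aN + bN + cN) * p + (p * p * (aN + 2 * bN + cN) + mN * p) := ⟨_, rfl⟩
  have hshift : ∀ x y δ ε S : ℕ, δ < p → ε < p → x + y ≤ S →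
      ν (x + δ, y + ε) ≤ ν (x, y) + (CE * S + CE) := by
    intro x y δ ε S hδ hε hxyS
    have h0 := hν x y
    have h1 := hν (x + δ) (y + ε)
    push_cast at h1
    have hδZ : (δ : ℤ) ≤ p := by exact_mod_cast le_of_lt hδ
    have hεZ : (ε : ℤ) ≤ p := by exact_mod_cast le_of_lt hε
    have hxS : (x : ℤ) ≤ S := by exact_mod_cast (by omega : x ≤ S)
    have hyS : (y : ℤ) ≤ S := by exact_mod_cast (by omega : y ≤ S)
    have hxyS' : (x : ℤ) + y ≤ S := by exact_mod_cast hxyS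
    have hx0 : (0:ℤ) ≤ x := by positivity
    have hy0 : (0:ℤ) ≤ y := by positivity
    have hδ0 : (0:ℤ) ≤ δ := by positivity
    have hε0 : (0:ℤ) ≤ ε := by positivity
    have hS0 : (0:ℤ) ≤ S := by positivity
    have hp0' : (0:ℤ) ≤ p := by positivity
    have ha0 : (0:ℤ) ≤ a := by omega
    have hc0 : (0:ℤ) ≤ c := by omega
    have hbN0 : (0:ℤ) ≤ bN := by positivity
    have hmN0 : (0:ℤ) ≤ mN := by positivity
    have u1 : (x : ℤ) * δ ≤ S * p := mul_le_mul hxS hδZ hδ0 hS0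
    have u2 : (δ : ℤ) * δ ≤ p * p := mul_le_mul hδZ hδZ hδ0 hp0'
    have u3 : (y : ℤ) * ε ≤ S * p := mul_le_mul hyS hεZ hε0 hS0
    have u4 : (ε : ℤ) * ε ≤ p * p := mul_le_mul hεZ hεZ hε0 hp0'
    have u6 : (δ : ℤ) * ε ≤ p * p := mul_le_mul hδZ hεZ hε0 hp0'
    have u5 : (x : ℤ) * ε + y * δ ≤ S * p := by
      have w1 : (x : ℤ) * ε ≤ x * p := mul_le_mul_of_nonneg_left hεZ hx0
      have w2 : (y : ℤ) * δ ≤ y * p := mul_le_mul_of_nonneg_left hδZ hy0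
      have w3 : ((x : ℤ) + y) * p ≤ S * p := mul_le_mul_of_nonneg_right hxyS' hp0'
      linarith only [w1, w2, w3]
    have t1 : a * ((x : ℤ) * δ) ≤ a * (S * p) := mul_le_mul_of_nonneg_left u1 ha0
    have t2 : a * ((δ : ℤ) * δ) ≤ a * (p * p) := mul_le_mul_of_nonneg_left u2 ha0
    have t3 : c * ((y : ℤ) * ε) ≤ c * (S * p) := mul_le_mul_of_nonneg_left u3 hc0
    have t4 : c * ((ε : ℤ) * ε) ≤ c * (p * p) := mul_le_mul_of_nonneg_left u4 hc0
    have t5 : b * ((x : ℤ) * ε + y * δ) ≤ (bN : ℤ) * (S * p) := by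
      have h50 : (0:ℤ) ≤ (x : ℤ) * ε + y * δ := by positivity
      calc b * ((x : ℤ) * ε + y * δ) ≤ (bN : ℤ) * ((x : ℤ) * ε + y * δ) :=
            mul_le_mul_of_nonneg_right hbN1 h50
        _ ≤ (bN : ℤ) * (S * p) := mul_le_mul_of_nonneg_left u5 hbN0
    have t6 : b * ((δ : ℤ) * ε) ≤ (bN : ℤ) * (p * p) := by
      have h60 : (0:ℤ) ≤ (δ : ℤ) * ε := by positivity
      calc b * ((δ : ℤ) * ε) ≤ (bN : ℤ) * ((δ : ℤ) * ε) :=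
            mul_le_mul_of_nonneg_right hbN1 h60
        _ ≤ (bN : ℤ) * (p * p) := mul_le_mul_of_nonneg_left u6 hbN0
    have t7 : d * (δ : ℤ) ≤ (mN : ℤ) * p := by
      calc d * (δ : ℤ) ≤ (mN : ℤ) * δ := mul_le_mul_of_nonneg_right hd1 hδ0
        _ ≤ (mN : ℤ) * p := mul_le_mul_of_nonneg_left hδZ hmN0
    have t8 : e * (ε : ℤ) ≤ (mN : ℤ) * p := by
      calc e * (ε : ℤ) ≤ (mN : ℤ) * ε := mul_le_mul_of_nonneg_right he1 hε0
        _ ≤ (mN : ℤ) * p := mul_le_mul_of_nonneg_left hεZ hmN0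
    obtain ⟨BudN, hBudN⟩ : ∃ t : ℕ,
        t = (aN + bN + cN) * p * S + (p * p * (aN + 2 * bN + cN) + mN * p) := ⟨_, rfl⟩
    have hbudcast : ((BudN : ℕ) : ℤ)
        = (a + bN + c) * p * S + (p * p * (a + 2 * bN + c) + mN * p) := by
      rw [hBudN]; push_cast [haN, hcN]; ring
    have hZ : 2 * ((ν (x + δ, y + ε) : ℕ) : ℤ) ≤ 2 * ((ν (x, y) : ℕ) : ℤ) + 2 * BudN := by
      rw [hbudcast]
      have t9 : (0:ℤ) ≤ p * p * (a + 2 * bN + c) :=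
        mul_nonneg (mul_nonneg hp0' hp0') (by linarith)
      linarith only [h0, h1, t1, t2, t3, t4, t5, t6, t7, t8, t9]
    have hZN : 2 * ν (x + δ, y + ε) ≤ 2 * ν (x, y) + 2 * BudN := by exact_mod_cast hZ
    have hBle : BudN ≤ CE * S + CE := by
      rw [hBudN, hCE]
      have : (aN + bN + cN) * p * S ≤ ((aN + bN + cN) * p + (p * p * (aN + 2 * bN + cN) + mN * p)) * S :=
        Nat.mul_le_mul_right _ (Nat.le_add_right _ _)
      omega
    omega
  have hp3 : 3 ≤ p := by omega
  exact counting_contradiction p hp3 ν hinj hsurj x₀.val y₀.val r₀.val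
    (ZMod.val_lt _) (ZMod.val_lt _) (ZMod.val_lt _) hclass _ CE hcoer hshift


theorem packing_quadratic_discriminant_is_square
    (a c f : ℕ) (b d e : ℤ) (hquad : ¬ (a = 0 ∧ b = 0 ∧ c = 0))
    (had : (a : ℤ) % 2 = d % 2) (hce : (c : ℤ) % 2 = e % 2)
    (F : ℕ × ℕ → ℚ)
    (hF : ∀ p : ℕ × ℕ, F p =
      ((a : ℚ) * p.1 ^ 2 + 2 * (b : ℚ) * p.1 * p.2 + (c : ℚ) * p.2 ^ 2) / 2
        + ((d : ℚ) * p.1 + (e : ℚ) * p.2) / 2 + (f : ℚ))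
    (hmaps : ∀ p : ℕ × ℕ, ∃ n : ℕ, F p = n)
    (hbij : ∀ n : ℕ, ∃! p : ℕ × ℕ, F p = n) :
    ∃ t : ℤ, b ^ 2 - (a : ℤ) * c = t ^ 2 := by
  by_contra hns
  have hnsq : ¬ IsSquare (b ^ 2 - (a : ℤ) * c) := by
    rintro ⟨r, hr⟩
    exact hns ⟨r, by rw [hr]; ring⟩
  have ha0 : a ≠ 0 := by
    rintro rfl
    exact hns ⟨b, by push_cast; ring⟩
  have hc0 : c ≠ 0 := by
    rintro rfl
    exact hns ⟨b, by push_cast; ring⟩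
  -- extract the integer-valued function
  choose ν hFν using hmaps
  have hid : ∀ x y : ℕ, (2 * ν (x, y) : ℤ)
      = a * x ^ 2 + 2 * b * x * y + c * y ^ 2 + d * x + e * y + 2 * f := by
    intro x y
    have h1 := hF (x, y)
    rw [hFν (x, y)] at h1
    have h2 : ((2 * ν (x, y) : ℤ) : ℚ)
        = (((a : ℤ) * x ^ 2 + 2 * b * x * y + c * y ^ 2 + d * x + e * y + 2 * f : ℤ) : ℚ) := by
      push_cast
      rw [h1]
      push_cast
      ring
    exact_mod_cast h2
  have hinj : Function.Injective ν := by
    intro p q h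
    obtain ⟨r, _, hr⟩ := hbij (ν p)
    have h1 : F p = (ν p : ℚ) := hFν p
    have h2 : F q = (ν p : ℚ) := by rw [hFν q, h]
    rw [hr p h1, hr q h2]
  have hsurj : ∀ n : ℕ, ∃ q, ν q = n := by
    intro n
    obtain ⟨q, hq, -⟩ := hbij n
    refine ⟨q, ?_⟩
    have : (ν q : ℚ) = (n : ℚ) := by rw [← hFν q, hq]
    exact_mod_cast this
  have haZ : (1 : ℤ) ≤ (a : ℕ) := by exact_mod_cast Nat.one_le_iff_ne_zero.mpr ha0
  have hcZ : (1 : ℤ) ≤ (c : ℕ) := by exact_mod_cast Nat.one_le_iff_ne_zero.mpr hc0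
  -- rule out b < 0 with positive discriminant
  have hbD : 0 ≤ b ∨ b ^ 2 - (a : ℤ) * c < 0 := by
    by_contra hcon
    push_neg at hcon
    obtain ⟨hbneg, hDpos⟩ := hcon
    have hD1 : (1 : ℤ) ≤ b ^ 2 - (a : ℤ) * c := by
      rcases lt_or_eq_of_le hDpos with h | h
      · omega
      · exact absurd ⟨0, by rw [← h]; ring⟩ hnsq
    obtain ⟨nb, hnb⟩ : ∃ t : ℕ, (t : ℤ) = -b := ⟨b.natAbs, by
      rcases Int.natAbs_eq b with h | h <;> omega⟩
    obtain ⟨aL, hL1, hL2⟩ : ∃ t : ℕ, d * (c : ℤ) - e * b ≤ t ∧ -(t : ℤ) ≤ d * (c : ℤ) - e * b :=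
      ⟨(d * (c : ℤ) - e * b).natAbs, by
        rcases Int.natAbs_eq (d * (c : ℤ) - e * b) with h | h <;> omega,
       by rcases Int.natAbs_eq (d * (c : ℤ) - e * b) with h | h <;> omega⟩
    obtain ⟨k, hk⟩ : ∃ t : ℕ, t = aL + 2 * f + 1 := ⟨_, rfl⟩
    have h := hid (k * c) (k * nb)
    push_cast at h
    rw [hnb] at h
    have hk1 : (1 : ℤ) ≤ k := by exact_mod_cast (by omega : 1 ≤ k)
    have hkZ : ((aL : ℤ) + 2 * f + 1) = k := by exact_mod_cast hk.symm
    have hν0 : (0 : ℤ) ≤ 2 * ν (k * c, k * nb) := by positivity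
    have hf0 : (0 : ℤ) ≤ (f : ℤ) := by positivity
    have haL0 : (0 : ℤ) ≤ (aL : ℤ) := by positivity
    have F1 : (0 : ℤ) ≤ ((c : ℤ) * (b ^ 2 - a * c) - 1) * (k : ℤ) ^ 2 := by
      have : (1 : ℤ) ≤ (c : ℤ) * (b ^ 2 - a * c) := by nlinarith
      nlinarith [sq_nonneg (k : ℤ)]
    have F2 : (d * (c : ℤ) - e * b) * k ≤ (aL : ℤ) * k :=
      mul_le_mul_of_nonneg_right hL1 (by linarith)
    have F3 : ((aL : ℤ) + 2 * f + 1) * k ≤ (k : ℤ) * k := by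
      apply mul_le_mul_of_nonneg_right _ (by linarith)
      omega
    have F4 : (0 : ℤ) ≤ (f : ℤ) * ((k : ℤ) - 1) := mul_nonneg hf0 (by linarith)
    linarith only [h, F1, F2, F3, F4, hν0, hk1, hf0]
  exact (master a b c d e f haZ hcZ hbD ν hid hinj hsurj hnsq).elim
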